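/- At any fixed point of the bidding game where each client n pays ρ_n* > 0 and receives delivery ratio q_n* > 0, the vector q* maximizes the total utility Σ U_i(q_i) over the feasible region. -/

import Mathlib

open Finset

/-- Theorem 3: at any fixed point of the bidding game where each client `n` pays
`ρ n > 0` and receives delivery ratio `q n > 0`, the vector `q` maximizes the total
utility `∑ U_i(q_i)` over the feasible region.  The fixed point property says, with
`ψ n = ρ n / q n`, that (a) `ρ n` maximizes `U_n(r/ψ_n) - r` over `r ≥ 0` for every
`n`, and (b) `q` maximizes `∑ ρ_i log q_i` over the feasible region. -/
theorem stmt_7 (N : ℕ) (τ : ℝ) (p : Fin N → ℝ) (I : Finset (Fin N) → ℝ)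
    (hp : ∀ n, 0 < p n ∧ p n ≤ 1)
    (U : Fin N → ℝ → ℝ)
    (hUmono : ∀ n, StrictMonoOn (U n) (Set.Ioc 0 1))
    (hUconc : ∀ n, StrictConcaveOn ℝ (Set.Ioc 0 1) (U n))
    -- Slater's condition
    (hSlater : ∃ x : Fin N → ℝ, (∀ n, 0 < x n) ∧
      ∀ S : Finset (Fin N), ∑ i ∈ S, x i / p i < τ - I S)
    (q ρ ψ : Fin N → ℝ)
    (hqpos : ∀ n, 0 < q n) (hρpos : ∀ n, 0 < ρ n)
    (hψ : ∀ n, ψ n = ρ n / q n)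
    -- (a) each client's bid maximizes its net profit
    (hclient : ∀ n, ∀ r : ℝ, 0 ≤ r → U n (r / ψ n) - r ≤ U n (ρ n / ψ n) - ρ n)
    -- (b) the AP's allocation solves ACCESS-POINT
    (hqfeas : ∀ S : Finset (Fin N), ∑ i ∈ S, q i / p i ≤ τ - I S)
    (hap : ∀ q' : Fin N → ℝ, (∀ n, 0 < q' n) →
      (∀ S : Finset (Fin N), ∑ i ∈ S, q' i / p i ≤ τ - I S) →
      ∑ i, ρ i * Real.log (q' i) ≤ ∑ i, ρ i * Real.log (q i)) :
    ∀ q' : Fin N → ℝ, (∀ n, 0 ≤ q' n) →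
      (∀ S : Finset (Fin N), ∑ i ∈ S, q' i / p i ≤ τ - I S) →
      ∑ i, U i (q' i) ≤ ∑ i, U i (q i) := by
  intro q' hq'nonneg hq'feas
  have hψpos : ∀ n, 0 < ψ n := fun n => by
    rw [hψ n]; exact div_pos (hρpos n) (hqpos n)
  have hρψ : ∀ n, ρ n / ψ n = q n := fun n => by
    rw [hψ n]
    rw [div_div_eq_mul_div, mul_comm, mul_div_assoc, div_self (hρpos n).ne', mul_one]
  -- gradient inequality from the client's optimality
  have hgrad : ∀ n, U n (q' n) ≤ U n (q n) + ψ n * (q' n - q n) := by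
    intro n
    have h := hclient n (ψ n * q' n) (mul_nonneg (hψpos n).le (hq'nonneg n))
    rw [mul_div_cancel_left₀ _ (hψpos n).ne', hρψ n] at h
    have hρ : ρ n = ψ n * q n := by
      rw [hψ n, div_mul_cancel₀ _ (hqpos n).ne']
    rw [hρ] at h
    linarith
  -- the directional-derivative function along the segment from q to q'
  set f : ℝ → ℝ := fun t => ∑ i, ρ i * ((q' i - q i) / ((1 - t) * q i + t * q' i)) with hf
  have hfle : ∀ t ∈ Set.Ioo (0:ℝ) 1, f t ≤ 0 := by
    intro t ht
    set qt : Fin N → ℝ := fun i => (1 - t) * q i + t * q' i with hqt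
    have hqtpos : ∀ i, 0 < qt i := by
      intro i
      have h1 := hqpos i; have h2 := hq'nonneg i
      have := ht.1; have := ht.2
      simp only [hqt]
      nlinarith
    have hqtfeas : ∀ S, ∑ i ∈ S, qt i / p i ≤ τ - I S := by
      intro S
      have h1 := hqfeas S
      have h2 := hq'feas S
      have hsplit : ∑ i ∈ S, qt i / p i
          = (1 - t) * ∑ i ∈ S, q i / p i + t * ∑ i ∈ S, q' i / p i := by
        rw [Finset.mul_sum, Finset.mul_sum, ← Finset.sum_add_distrib]
        apply Finset.sum_congr rfl
        intro i _
        simp only [hqt]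
        ring
      rw [hsplit]
      nlinarith [ht.1.le, ht.2.le]
    have hmax := hap qt hqtpos hqtfeas
    have hlog : ∀ i ∈ Finset.univ (α := Fin N),
        ρ i * Real.log (q i) - ρ i * Real.log (qt i)
          ≤ -(t * (ρ i * ((q' i - q i) / qt i))) := by
      intro i _
      have h1 : Real.log (q i) - Real.log (qt i) = Real.log (q i / qt i) :=
        (Real.log_div (hqpos i).ne' (hqtpos i).ne').symm
      have h2 : Real.log (q i / qt i) ≤ q i / qt i - 1 :=
        Real.log_le_sub_one_of_pos (div_pos (hqpos i) (hqtpos i))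
      have h3 : q i / qt i - 1 = -(t * ((q' i - q i) / qt i)) := by
        have hne : qt i ≠ 0 := (hqtpos i).ne'
        field_simp
        simp only [hqt]
        ring
      have h4 : Real.log (q i) - Real.log (qt i) ≤ -(t * ((q' i - q i) / qt i)) := by
        rw [h1]; rw [h3] at h2; exact h2
      have hρi := (hρpos i).le
      nlinarith [h4]
    have hsum := Finset.sum_le_sum hlog
    rw [Finset.sum_sub_distrib] at hsum
    have h0 : (0:ℝ) ≤ ∑ i, -(t * (ρ i * ((q' i - q i) / qt i))) := le_trans (by linarith) hsum
    have hft : t * f t ≤ 0 := by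
      have : ∑ i, -(t * (ρ i * ((q' i - q i) / qt i))) = -(t * f t) := by
        simp only [hf, Finset.mul_sum, ← Finset.sum_neg_distrib]
        rfl
      rw [this] at h0
      linarith
    nlinarith [ht.1, hft]
  -- pass to the limit t → 0⁺
  have htend : Filter.Tendsto f (nhdsWithin 0 (Set.Ioi 0))
      (nhds (∑ i, ρ i * ((q' i - q i) / q i))) := by
    have hc : Filter.Tendsto f (nhds 0) (nhds (∑ i, ρ i * ((q' i - q i) / q i))) := by
      simp only [hf]
      apply tendsto_finset_sum
      intro i _
      have hcc : ContinuousAt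
          (fun t : ℝ => ρ i * ((q' i - q i) / ((1 - t) * q i + t * q' i))) 0 := by
        apply ContinuousAt.mul continuousAt_const
        apply ContinuousAt.div continuousAt_const (by fun_prop)
        simpa using (hqpos i).ne'
      simpa using hcc.tendsto
    exact hc.mono_left nhdsWithin_le_nhds
  have hev : ∀ᶠ t in nhdsWithin 0 (Set.Ioi 0), f t ≤ 0 := by
    filter_upwards [Ioo_mem_nhdsGT_of_mem (by constructor <;> norm_num : (0:ℝ) ∈ Set.Ico 0 1)]
      with t ht using hfle t ht
  have hsum0 : ∑ i, ρ i * ((q' i - q i) / q i) ≤ 0 := le_of_tendsto htend hev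
  calc ∑ i, U i (q' i) ≤ ∑ i, (U i (q i) + ψ i * (q' i - q i)) :=
        Finset.sum_le_sum (fun i _ => hgrad i)
    _ = ∑ i, U i (q i) + ∑ i, ρ i * ((q' i - q i) / q i) := by
        rw [Finset.sum_add_distrib]
        congr 1
        apply Finset.sum_congr rfl
        intro i _
        rw [hψ i]
        ring
    _ ≤ ∑ i, U i (q i) := by linarith
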